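/- Let G = ℤ(√2) = {m + n√2 : m, n ∈ ℤ} regarded as an additive subgroup of ℝ, let P = G ∩ [0, ∞), and let A = ℤ(2√2) = {m + 2n√2 : m, n ∈ ℤ}, an additive subgroup of G. Then no nonzero element of P is a minimal representative of its coset modulo A: for every p ∈ P with p > 0 there exists q ∈ (p + A) ∩ P with q < p (equivalently, q ∈ (p + A) ∩ P but p ≤ q fails for the order x ≤ y iff y − x ∈ P). -/
import Mathlib

open Real Set

noncomputable def S17 : AddSubgroup ℝ where
  carrier := {x | ∃ m n : ℤ, x = (m : ℝ) + 2 * (n : ℝ) * Real.sqrt 2}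
  zero_mem' := ⟨0, 0, by norm_num⟩
  add_mem' := by
    rintro x y ⟨a, b, rfl⟩ ⟨c, d, rfl⟩
    exact ⟨a + c, b + d, by push_cast; ring⟩
  neg_mem' := by
    rintro x ⟨a, b, rfl⟩
    exact ⟨-a, -b, by push_cast; ring⟩

lemma pow_mem_S17 (k : ℕ) : (2 * Real.sqrt 2 - 2) ^ k ∈ S17 := by
  induction k with
  | zero => exact ⟨1, 0, by norm_num⟩
  | succ n ih =>
    obtain ⟨a, b, hab⟩ := ih
    refine ⟨8 * b - 2 * a, a - 2 * b, ?_⟩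
    have h2 : Real.sqrt 2 * Real.sqrt 2 = 2 := Real.mul_self_sqrt (by norm_num)
    rw [pow_succ, hab]
    push_cast
    linear_combination (4*(b:ℝ)) * h2

lemma S17_dense : Dense (S17 : Set ℝ) := by
  apply AddSubgroup.dense_of_not_isolated_zero
  intro ε hε
  have hs : (1.4 : ℝ) < Real.sqrt 2 := by
    rw [show (1.4 : ℝ) = Real.sqrt (1.4 ^ 2) by
      rw [Real.sqrt_sq]; norm_num]
    exact Real.sqrt_lt_sqrt (by norm_num) (by norm_num)
  have hs' : Real.sqrt 2 < 1.5 := by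
    rw [show (1.5 : ℝ) = Real.sqrt (1.5 ^ 2) by
      rw [Real.sqrt_sq]; norm_num]
    exact Real.sqrt_lt_sqrt (by norm_num) (by norm_num)
  have h0 : (0 : ℝ) < 2 * Real.sqrt 2 - 2 := by linarith
  have h1 : 2 * Real.sqrt 2 - 2 < 1 := by linarith
  obtain ⟨k, hk⟩ := exists_pow_lt_of_lt_one hε h1
  exact ⟨_, pow_mem_S17 k, pow_pos h0 k, hk⟩

theorem stmt17 :
    ∀ p : ℝ,
      -- p ∈ G = ℤ(√2)
      (∃ m n : ℤ, p = (m : ℝ) + (n : ℝ) * Real.sqrt 2) →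
      -- p > 0 (so p is a nonzero element of P = G ∩ [0, ∞))
      0 < p →
      -- there is q ∈ (p + A) ∩ P with q < p, where A = ℤ(2√2)
      ∃ q : ℝ,
        (∃ m n : ℤ, q - p = (m : ℝ) + 2 * (n : ℝ) * Real.sqrt 2) ∧
        (∃ m n : ℤ, q = (m : ℝ) + (n : ℝ) * Real.sqrt 2) ∧
        0 ≤ q ∧ q < p := by
  rintro p ⟨m, n, rfl⟩ hp
  set p : ℝ := (m : ℝ) + (n : ℝ) * Real.sqrt 2 with hpdef
  obtain ⟨g, hgo, hgS⟩ := (dense_iff_inter_open.mp S17_dense) (Ioo (-p) 0)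
    isOpen_Ioo ⟨-p/2, by rw [Set.mem_Ioo]; constructor <;> linarith⟩
  obtain ⟨a, b, hab⟩ := hgS
  refine ⟨p + g, ⟨a, b, by rw [hab]; ring⟩, ⟨m + a, n + 2 * b, by rw [hab]; push_cast; ring⟩,
    ?_, ?_⟩
  · have := hgo.1; linarith
  · have := hgo.2; linarith
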